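/- Let m ≥ 2 and k ≥ 1 be integers, and let a₁, …, a_k ∈ ℕ be not all zero. If a₁·m^{k−1} + a₂·m^{k−2} + ⋯ + a_{k−1}·m + a_k ≡ 0 (mod m^k − 1), then the sum over j = 1, …, k of ⌊a_j / (m − 1)⌋ is at least k. -/

import Mathlib

open Finset

private lemma geom_range (m : ℕ) (hm : 1 ≤ m) :
    ∀ k, ∑ i ∈ Finset.range k, (m - 1) * m ^ i = m ^ k - 1 := by
  intro k
  induction k with
  | zero => simp
  | succ n ih =>
    rw [Finset.sum_range_succ, ih]
    have hp : 1 ≤ m ^ n := Nat.one_le_pow _ _ (by omega)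
    have h2 : m ^ (n + 1) = m * m ^ n := by ring
    have h3 : (m - 1) * m ^ n = m * m ^ n - m ^ n := by
      rw [Nat.sub_mul, one_mul]
    have h4 : m ^ n ≤ m * m ^ n := Nat.le_mul_of_pos_left _ (by omega)
    omega

private lemma geom_fin (m k : ℕ) (hm : 1 ≤ m) :
    ∑ i : Fin k, (m - 1) * m ^ (k - 1 - (i : ℕ)) = m ^ k - 1 := by
  rw [Fin.sum_univ_eq_sum_range (fun i => (m - 1) * m ^ (k - 1 - i)) k]
  rw [← geom_range m hm k, ← Finset.sum_range_reflect]
  apply Finset.sum_congr rfl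
  intro i hi
  simp only [Finset.mem_range] at hi
  congr 2
  omega

private lemma sum_split {M : Type*} [AddCommMonoid M] {k : ℕ} (j t : Fin k) (h : t ≠ j)
    (f : Fin k → M) :
    ∑ i, f i = f j + f t + ∑ i ∈ (Finset.univ.erase j).erase t, f i := by
  rw [← Finset.add_sum_erase _ f (Finset.mem_univ j),
    ← Finset.add_sum_erase _ f (Finset.mem_erase.mpr ⟨h, Finset.mem_univ t⟩), ← add_assoc]

private lemma key (m k : ℕ) (hm : 2 ≤ m) (hk : 2 ≤ k) :
    ∀ n (a : Fin k → ℕ), (∑ j, a j) = n → (∃ j, a j ≠ 0) →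
      (m ^ k - 1 ∣ ∑ j : Fin k, a j * m ^ (k - 1 - (j : ℕ))) →
      (k : ℤ) ≤ ∑ j : Fin k, ⌊(a j : ℚ) / ((m : ℚ) - 1)⌋ := by
  intro n
  induction n using Nat.strong_induction_on with
  | _ n ih =>
  intro a hsum hex hdvd
  by_cases hsmall : ∀ i, a i ≤ m - 1
  · -- terminal case
    have hSpos : 0 < ∑ j : Fin k, a j * m ^ (k - 1 - (j : ℕ)) := by
      obtain ⟨j0, hj0⟩ := hex
      have h1 : 0 < a j0 * m ^ (k - 1 - (j0 : ℕ)) :=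
        Nat.mul_pos (Nat.pos_of_ne_zero hj0) (Nat.pow_pos (by omega))
      exact lt_of_lt_of_le h1
        (Finset.single_le_sum (f := fun i => a i * m ^ (k - 1 - (i : ℕ)))
          (fun i _ => Nat.zero_le _) (Finset.mem_univ j0))
    have hge : m ^ k - 1 ≤ ∑ j : Fin k, a j * m ^ (k - 1 - (j : ℕ)) :=
      Nat.le_of_dvd hSpos hdvd
    have hall : ∀ i, a i = m - 1 := by
      by_contra hc
      push_neg at hc
      obtain ⟨i0, hi0⟩ := hc
      have hlt : a i0 < m - 1 := lt_of_le_of_ne (hsmall i0) hi0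
      have hS : (∑ j : Fin k, a j * m ^ (k - 1 - (j : ℕ))) < m ^ k - 1 := by
        rw [← geom_fin m k (by omega)]
        refine Finset.sum_lt_sum (fun i _ => Nat.mul_le_mul_right _ (hsmall i))
          ⟨i0, Finset.mem_univ i0, ?_⟩
        exact (Nat.mul_lt_mul_right (Nat.pow_pos (by omega))).mpr hlt
      omega
    have hone : ∀ i : Fin k, ⌊(a i : ℚ) / ((m : ℚ) - 1)⌋ = 1 := by
      intro i
      rw [hall i]
      have hmc : ((m - 1 : ℕ) : ℚ) = (m : ℚ) - 1 := by
        push_cast [Nat.cast_sub (by omega : 1 ≤ m)]; ring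
      have hne : ((m : ℚ) - 1) ≠ 0 := by
        have : (2 : ℚ) ≤ (m : ℚ) := by exact_mod_cast hm
        linarith
      rw [hmc, div_self hne, Int.floor_one]
    rw [Finset.sum_congr rfl (fun i _ => hone i)]
    simp
  · push_neg at hsmall
    obtain ⟨j, hj⟩ := hsmall
    have hmj : m ≤ a j := by omega
    have hjk : (j : ℕ) < k := j.isLt
    set t : Fin k := if (j : ℕ) = 0 then ⟨k - 1, by omega⟩ else ⟨(j : ℕ) - 1, by omega⟩ with ht
    have htval : (t : ℕ) = if (j : ℕ) = 0 then k - 1 else (j : ℕ) - 1 := by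
      by_cases h0 : (j : ℕ) = 0 <;> simp [ht, h0]
    have htj : t ≠ j := by
      intro h
      have := congrArg Fin.val h
      rw [htval] at this
      by_cases h0 : (j : ℕ) = 0 <;> simp [h0] at this <;> omega
    set a' : Fin k → ℕ := fun i => if i = j then a j - m else if i = t then a t + 1 else a i
      with ha'
    have ha'j : a' j = a j - m := by simp [ha']
    have ha't : a' t = a t + 1 := by simp [ha', htj]
    have ha'rest : ∀ i ∈ (Finset.univ.erase j).erase t, a' i = a i := by
      intro i hi
      simp only [Finset.mem_erase] at hi
      simp [ha', hi.1, hi.2.1]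
    -- sum decreases
    have hsum' : ∑ i, a' i < n := by
      have hR : ∑ i ∈ (Finset.univ.erase j).erase t, a' i
          = ∑ i ∈ (Finset.univ.erase j).erase t, a i := Finset.sum_congr rfl ha'rest
      rw [← hsum, sum_split j t htj a', sum_split j t htj a, ha'j, ha't, hR]
      omega
    -- divisibility
    have hdvd' : m ^ k - 1 ∣ ∑ i : Fin k, a' i * m ^ (k - 1 - (i : ℕ)) := by
      rw [← Int.natCast_dvd_natCast]
      have hSpos : 0 < ∑ i : Fin k, a i * m ^ (k - 1 - (i : ℕ)) := by
        obtain ⟨j0, hj0⟩ := hex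
        have h1 : 0 < a j0 * m ^ (k - 1 - (j0 : ℕ)) :=
          Nat.mul_pos (Nat.pos_of_ne_zero hj0) (Nat.pow_pos (by omega))
        exact lt_of_lt_of_le h1
          (Finset.single_le_sum (f := fun i => a i * m ^ (k - 1 - (i : ℕ)))
            (fun i _ => Nat.zero_le _) (Finset.mem_univ j0))
      have hge : m ^ k - 1 ≤ ∑ i : Fin k, a i * m ^ (k - 1 - (i : ℕ)) :=
        Nat.le_of_dvd hSpos hdvd
      have hcastS :
          ((∑ i : Fin k, a' i * m ^ (k - 1 - (i : ℕ)) : ℕ) : ℤ)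
            = (∑ i : Fin k, a i * m ^ (k - 1 - (i : ℕ)) : ℕ)
              - (if (j : ℕ) = 0 then ((m : ℤ) ^ k - 1) else 0) := by
        rw [sum_split j t htj (fun i => a' i * m ^ (k - 1 - (i : ℕ))),
          sum_split j t htj (fun i => a i * m ^ (k - 1 - (i : ℕ)))]
        simp only [ha'j, ha't]
        rw [Finset.sum_congr rfl (fun i hi => by rw [ha'rest i hi])]
        push_cast [Nat.cast_sub hmj]
        by_cases h0 : (j : ℕ) = 0
        · rw [if_pos h0]
          have het : k - 1 - (t : ℕ) = 0 := by rw [htval, if_pos h0]; omega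
          have hej : k - 1 - (j : ℕ) = k - 1 := by omega
          rw [het, hej]
          have : (m : ℤ) ^ k = m * m ^ (k - 1) := by
            rw [← pow_succ']; congr 1; omega
          rw [this]; ring
        · rw [if_neg h0]
          have het : k - 1 - (t : ℕ) = (k - 1 - (j : ℕ)) + 1 := by
            rw [htval, if_neg h0]; omega
          rw [het, pow_succ]
          ring
      rw [hcastS]
      by_cases h0 : (j : ℕ) = 0
      · rw [if_pos h0]
        refine dvd_sub ?_ ?_
        · exact_mod_cast hdvd
        · have : ((m ^ k - 1 : ℕ) : ℤ) = (m : ℤ) ^ k - 1 := by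
            push_cast [Nat.cast_sub (Nat.one_le_pow _ _ (by omega : 0 < m))]; ring
          rw [← this]
      · rw [if_neg h0, sub_zero]
        exact_mod_cast hdvd
    -- nonzero
    have hex' : ∃ i, a' i ≠ 0 := ⟨t, by rw [ha't]; omega⟩
    -- apply IH
    have hIH := ih _ hsum' a' rfl hex' hdvd'
    refine le_trans hIH ?_
    -- floor sum does not increase
    rw [sum_split j t htj (fun i => ⌊(a' i : ℚ) / ((m : ℚ) - 1)⌋),
      sum_split j t htj (fun i => ⌊(a i : ℚ) / ((m : ℚ) - 1)⌋)]
    rw [Finset.sum_congr rfl (fun i hi => by rw [ha'rest i hi])]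
    have hc1 : (1 : ℚ) ≤ (m : ℚ) - 1 := by
      have : (2 : ℚ) ≤ (m : ℚ) := by exact_mod_cast hm
      linarith
    have hcpos : (0 : ℚ) < (m : ℚ) - 1 := by linarith
    have hfj : ⌊(a' j : ℚ) / ((m : ℚ) - 1)⌋ ≤ ⌊(a j : ℚ) / ((m : ℚ) - 1)⌋ - 1 := by
      rw [ha'j]
      have hcast : ((a j - m : ℕ) : ℚ) = (a j : ℚ) - m := by
        push_cast [Nat.cast_sub hmj]; ring
      rw [hcast]
      have h1 : ((a j : ℚ) - m) / ((m : ℚ) - 1) ≤ (a j : ℚ) / ((m : ℚ) - 1) - 1 := by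
        rw [sub_div]
        have : (1 : ℚ) ≤ (m : ℚ) / ((m : ℚ) - 1) := by
          rw [le_div_iff₀ hcpos]; linarith
        linarith
      calc ⌊((a j : ℚ) - m) / ((m : ℚ) - 1)⌋
          ≤ ⌊(a j : ℚ) / ((m : ℚ) - 1) - 1⌋ := Int.floor_le_floor h1
        _ = ⌊(a j : ℚ) / ((m : ℚ) - 1)⌋ - 1 := by
            rw [show (1 : ℚ) = ((1 : ℤ) : ℚ) by norm_num, Int.floor_sub_intCast]
    have hft : ⌊(a' t : ℚ) / ((m : ℚ) - 1)⌋ ≤ ⌊(a t : ℚ) / ((m : ℚ) - 1)⌋ + 1 := by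
      rw [ha't]
      push_cast
      have h1 : ((a t : ℚ) + 1) / ((m : ℚ) - 1) ≤ (a t : ℚ) / ((m : ℚ) - 1) + 1 := by
        rw [add_div]
        have : (1 : ℚ) / ((m : ℚ) - 1) ≤ 1 := by
          rw [div_le_one hcpos]; linarith
        linarith
      calc ⌊((a t : ℚ) + 1) / ((m : ℚ) - 1)⌋
          ≤ ⌊(a t : ℚ) / ((m : ℚ) - 1) + 1⌋ := Int.floor_le_floor (by push_cast; exact h1)
        _ = ⌊(a t : ℚ) / ((m : ℚ) - 1)⌋ + 1 := by
            rw [show (1 : ℚ) = ((1 : ℤ) : ℚ) by norm_num, Int.floor_add_intCast]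
    omega

/-- If `m ≥ 2`, `k ≥ 1`, `a₁,…,a_k ∈ ℕ` are not all zero and
`a₁·m^{k-1} + ⋯ + a_k ≡ 0 (mod m^k - 1)`, then `∑ⱼ ⌊aⱼ/(m-1)⌋ ≥ k`. -/
theorem sum_floor_ge (m k : ℕ) (hm : 2 ≤ m) (hk : 1 ≤ k) (a : Fin k → ℕ)
    (ha : ∃ j, a j ≠ 0)
    (hcong : m ^ k - 1 ∣ ∑ j : Fin k, a j * m ^ (k - 1 - (j : ℕ))) :
    (k : ℤ) ≤ ∑ j : Fin k, ⌊(a j : ℚ) / ((m : ℚ) - 1)⌋ := by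
  rcases Nat.lt_or_ge k 2 with hk2 | hk2
  · have hk1 : k = 1 := by omega
    subst hk1
    obtain ⟨j, hj⟩ := ha
    have hj0 : j = 0 := Subsingleton.elim _ _
    subst hj0
    simp only [Fin.sum_univ_one, Fin.val_zero, Nat.sub_self, pow_zero, mul_one, pow_one]
      at hcong ⊢
    have hle : m - 1 ≤ a 0 := Nat.le_of_dvd (Nat.pos_of_ne_zero hj) hcong
    have hcpos : (0 : ℚ) < (m : ℚ) - 1 := by
      have : (2 : ℚ) ≤ (m : ℚ) := by exact_mod_cast hm
      linarith
    have h1 : (1 : ℚ) ≤ (a 0 : ℚ) / ((m : ℚ) - 1) := by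
      rw [le_div_iff₀ hcpos, one_mul]
      have : ((m - 1 : ℕ) : ℚ) ≤ (a 0 : ℚ) := by exact_mod_cast hle
      have hc : ((m - 1 : ℕ) : ℚ) = (m : ℚ) - 1 := by
        push_cast [Nat.cast_sub (by omega : 1 ≤ m)]; ring
      linarith [hc ▸ this]
    exact_mod_cast Int.le_floor.mpr (by exact_mod_cast h1)
  · exact key m k hm hk2 (∑ j, a j) a rfl ha hcong
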